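/- Let Ω ⊆ ℝ² be open, v ∈ C^∞(Ω), p ∈ (1,∞), β > −1, and let x ∈ Ω be a point with Dv(x) ≠ 0 at which |Dv(x)|² Δv(x) + (p − 2) Δ∞v(x) = 0 (the p-Laplace equation in nondivergence form). Let G(y) = |Dv(y)|^{β} Dv(y), which is C¹ on a neighborhood of x. Then −det DG(x) = (1/(β+1)) |D(|Dv|^{β+1})(x)|² + (β+1)(p−2) |Dv(x)|^{2β} (Δ∞v(x))² / |Dv(x)|⁴. -/

import Mathlib

open Real MeasureTheory
open scoped RealInnerProductSpace

noncomputable section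

/-- The Euclidean plane ℝ². -/
abbrev E2 : Type := EuclideanSpace ℝ (Fin 2)

/-- Standard basis vector. -/
def ee (i : Fin 2) : E2 := EuclideanSpace.single i (1 : ℝ)

/-- Partial derivative ∂ᵢf. -/
def pd (i : Fin 2) (f : E2 → ℝ) (x : E2) : ℝ := fderiv ℝ f x (ee i)

/-- Second partial derivative ∂ᵢ∂ⱼf. -/
def pd2 (i j : Fin 2) (f : E2 → ℝ) (x : E2) : ℝ := pd i (pd j f) x

/-- |Df|², squared Euclidean norm of the gradient. -/
def gradSq (f : E2 → ℝ) (x : E2) : ℝ := (pd 0 f x) ^ 2 + (pd 1 f x) ^ 2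

/-- |Df|, Euclidean norm of the gradient. -/
def gradNorm (f : E2 → ℝ) (x : E2) : ℝ := Real.sqrt (gradSq f x)

/-- Laplacian Δf = tr D²f. -/
def lap (f : E2 → ℝ) (x : E2) : ℝ := pd2 0 0 f x + pd2 1 1 f x

/-- ∞-Laplacian Δ∞f = D²f Df · Df. -/
def infLap (f : E2 → ℝ) (x : E2) : ℝ :=
  pd2 0 0 f x * pd 0 f x * pd 0 f x + pd2 0 1 f x * pd 0 f x * pd 1 f x +
  pd2 1 0 f x * pd 1 f x * pd 0 f x + pd2 1 1 f x * pd 1 f x * pd 1 f x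

/-- |D²f|², squared Frobenius norm of the Hessian. -/
def hessFrobSq (f : E2 → ℝ) (x : E2) : ℝ :=
  (pd2 0 0 f x) ^ 2 + (pd2 0 1 f x) ^ 2 + (pd2 1 0 f x) ^ 2 + (pd2 1 1 f x) ^ 2

/-- det D²f, determinant of the Hessian. -/
def detHess (f : E2 → ℝ) (x : E2) : ℝ :=
  pd2 0 0 f x * pd2 1 1 f x - pd2 0 1 f x * pd2 1 0 f x

/-- |D²f Df|². -/
def hessGradSq (f : E2 → ℝ) (x : E2) : ℝ :=
  (pd2 0 0 f x * pd 0 f x + pd2 0 1 f x * pd 1 f x) ^ 2 +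
  (pd2 1 0 f x * pd 0 f x + pd2 1 1 f x * pd 1 f x) ^ 2

/-- Jacobian determinant of the planar map with components `F 0`, `F 1`. -/
def jdet (F : Fin 2 → E2 → ℝ) (x : E2) : ℝ :=
  pd 0 (F 0) x * pd 1 (F 1) x - pd 1 (F 0) x * pd 0 (F 1) x

/-- Squared Frobenius norm of the Jacobian of the planar map with components `F 0`, `F 1`. -/
def jFrobSq (F : Fin 2 → E2 → ℝ) (x : E2) : ℝ :=
  (pd 0 (F 0) x) ^ 2 + (pd 1 (F 0) x) ^ 2 + (pd 0 (F 1) x) ^ 2 + (pd 1 (F 1) x) ^ 2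

/-- Df · Dg. -/
def gradDot (f g : E2 → ℝ) (x : E2) : ℝ :=
  pd 0 f x * pd 0 g x + pd 1 f x * pd 1 g x

/-- D²ψ Dv · Dv. -/
def hessQuad (ψ v : E2 → ℝ) (x : E2) : ℝ :=
  pd2 0 0 ψ x * pd 0 v x * pd 0 v x + pd2 0 1 ψ x * pd 0 v x * pd 1 v x +
  pd2 1 0 ψ x * pd 1 v x * pd 0 v x + pd2 1 1 ψ x * pd 1 v x * pd 1 v x

/-- (D²v Dv) · Dψ. -/
def hessGradDot (v ψ : E2 → ℝ) (x : E2) : ℝ :=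
  (pd2 0 0 v x * pd 0 v x + pd2 0 1 v x * pd 1 v x) * pd 0 ψ x +
  (pd2 1 0 v x * pd 0 v x + pd2 1 1 v x * pd 1 v x) * pd 1 ψ x

/-- Smooth compactly supported test function on Ω. -/
def IsTestOn (ψ : E2 → ℝ) (Ω : Set E2) : Prop :=
  ContDiff ℝ (⊤ : ℕ∞) ψ ∧ HasCompactSupport ψ ∧ tsupport ψ ⊆ Ω

/-- Components of W = |Dv|⁻¹ Dv. -/
def Wcomp (v : E2 → ℝ) (i : Fin 2) : E2 → ℝ := fun y => (gradNorm v y)⁻¹ * pd i v y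

/-- identity for −det DG where G = |Dv|^β Dv, at a point where the
p-Laplace equation holds in nondivergence form and Dv ≠ 0. -/
lemma alg_main (a b A B D p β q s : ℝ) (hq : q ≠ 0) (hb : β + 1 ≠ 0)
    (hT : a^2 + b^2 ≠ 0) (hq2 : q^2 = a^2 + b^2)
    (hpl : (a^2 + b^2) * (A + D) + (p-2) * (A*a*a + B*a*b + B*b*a + D*b*b) = 0) :
    -((s*q*A + a*(β*s*((A*a+B*b)/q))) * (s*q*D + b*(β*s*((B*a+D*b)/q)))
      - (s*q*B + a*(β*s*((B*a+D*b)/q))) * (s*q*B + b*(β*s*((A*a+B*b)/q))))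
    = (1/(β+1)) * (((β+1)*(s*q)*((A*a+B*b)/q))^2 + ((β+1)*(s*q)*((B*a+D*b)/q))^2)
      + (β+1) * (p-2) * (s^2*q^2) * (A*a*a + B*a*b + B*b*a + D*b*b)^2 / (a^2+b^2)^2 := by
  have h1 : (p-2) * (A*a*a + B*a*b + B*b*a + D*b*b) = -((a^2+b^2)*(A+D)) := by linarith
  have h2 : (β+1) * (p-2) * (s^2*q^2) * (A*a*a + B*a*b + B*b*a + D*b*b)^2 / (a^2+b^2)^2
      = -((β+1) * (s^2*(a^2+b^2)) * (A+D) * (A*a*a + B*a*b + B*b*a + D*b*b) / (a^2+b^2)) := by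
    rw [show (β+1) * (p-2) * (s^2*q^2) * (A*a*a + B*a*b + B*b*a + D*b*b)^2
        = (β+1) * (s^2*q^2) * ((p-2) * (A*a*a + B*a*b + B*b*a + D*b*b))
          * (A*a*a + B*a*b + B*b*a + D*b*b) by ring, h1, hq2]
    field_simp
  rw [h2]
  field_simp
  linear_combination (s^2*q^2*(B^2 - A*D)) * hq2

theorem stmt_11 (Ω : Set E2) (hΩ : IsOpen Ω) (v : E2 → ℝ)
    (hv : ContDiffOn ℝ (⊤ : ℕ∞) v Ω) (p : ℝ) (hp : 1 < p) (β : ℝ) (hβ : -1 < β)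
    (x : E2) (hx : x ∈ Ω) (hgrad : gradSq v x ≠ 0)
    (hpl : gradSq v x * lap v x + (p - 2) * infLap v x = 0) :
    -jdet (fun i y => gradNorm v y ^ β * pd i v y) x
      = (1/(β+1)) * ((pd 0 (fun y => gradNorm v y ^ (β+1)) x) ^ 2
            + (pd 1 (fun y => gradNorm v y ^ (β+1)) x) ^ 2)
        + (β+1) * (p-2) * gradNorm v x ^ (2*β) * (infLap v x) ^ 2 / (gradSq v x) ^ 2 := by
  have hvx : ContDiffAt ℝ (⊤ : ℕ∞) v x := hv.contDiffAt (hΩ.mem_nhds hx)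
  have hf' : ContDiffAt ℝ (⊤ : ℕ∞) (fderiv ℝ v) x := hvx.fderiv_right (by simp)
  have h2 : HasFDerivAt (fderiv ℝ v) (fderiv ℝ (fderiv ℝ v) x) x :=
    (hf'.differentiableAt (by simpa using (WithTop.coe_le_coe.mpr (le_top : (1:ℕ∞) ≤ ⊤)))).hasFDerivAt
  have hpdd : ∀ i : Fin 2, HasFDerivAt (pd i v)
      ((fderiv ℝ (fderiv ℝ v) x).flip (ee i)) x := by
    intro i
    have h := h2.clm_apply (hasFDerivAt_const (ee i) x)
    simp at h; exact h
  have hpd2 : ∀ i j : Fin 2, pd2 j i v x = fderiv ℝ (fderiv ℝ v) x (ee j) (ee i) := by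
    intro i j
    show fderiv ℝ (pd i v) x (ee j) = _
    rw [(hpdd i).fderiv]
    rfl
  have hsymm : pd2 0 1 v x = pd2 1 0 v x := by
    rw [hpd2, hpd2]
    exact hvx.isSymmSndFDerivAt (by simpa using (WithTop.coe_le_coe.mpr (le_top : (2:ℕ∞) ≤ ⊤))) _ _
  -- positivity of the gradient
  have hTnn : (0:ℝ) ≤ gradSq v x := by
    have : gradSq v x = (pd 0 v x) ^ 2 + (pd 1 v x) ^ 2 := rfl
    rw [this]; positivity
  have hTpos : (0:ℝ) < gradSq v x := lt_of_le_of_ne hTnn (Ne.symm hgrad)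
  have hqpos : (0:ℝ) < gradNorm v x := Real.sqrt_pos.mpr hTpos
  have hq0 : gradNorm v x ≠ 0 := ne_of_gt hqpos
  -- derivatives
  have hgS : HasFDerivAt (gradSq v) _ x :=
    ((hasDerivAt_pow 2 (pd 0 v x)).comp_hasFDerivAt x (hpdd 0)).add
      ((hasDerivAt_pow 2 (pd 1 v x)).comp_hasFDerivAt x (hpdd 1))
  have hsq : HasFDerivAt (gradNorm v) _ x :=
    (Real.hasDerivAt_sqrt hgrad).comp_hasFDerivAt x hgS
  have hrp : HasFDerivAt (fun y => gradNorm v y ^ β) _ x :=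
    (Real.hasDerivAt_rpow_const (p := β) (Or.inl hq0)).comp_hasFDerivAt x hsq
  have hrp1 : HasFDerivAt (fun y => gradNorm v y ^ (β+1)) _ x :=
    (Real.hasDerivAt_rpow_const (p := β+1) (Or.inl hq0)).comp_hasFDerivAt x hsq
  have hG0 : HasFDerivAt (fun y => gradNorm v y ^ β * pd 0 v y) _ x := hrp.mul (hpdd 0)
  have hG1 : HasFDerivAt (fun y => gradNorm v y ^ β * pd 1 v y) _ x := hrp.mul (hpdd 1)
  have hip : ∀ i j : Fin 2, ((fderiv ℝ (fderiv ℝ v) x).flip (ee i)) (ee j) = pd2 j i v x :=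
    fun i j => (hpd2 i j).symm
  have hsq' : Real.sqrt (gradSq v x) = gradNorm v x := rfl
  have hqb : gradNorm v x ^ β = gradNorm v x ^ (β-1) * gradNorm v x := by
    have h := Real.rpow_add hqpos (β-1) 1
    rw [sub_add_cancel] at h
    simpa [Real.rpow_one] using h
  have h2b : gradNorm v x ^ (2*β) = (gradNorm v x ^ (β-1))^2 * gradNorm v x ^ 2 := by
    have h1 : gradNorm v x ^ (2*β) = (gradNorm v x ^ β)^(2:ℕ) := by
      rw [← Real.rpow_natCast (gradNorm v x ^ β) 2, ← Real.rpow_mul hqpos.le]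
      norm_num [mul_comm]
    rw [h1, hqb]; ring
  have e00 : pd 0 (fun y => gradNorm v y ^ β * pd 0 v y) x
      = (gradNorm v x ^ (β-1))*(gradNorm v x)*(pd2 0 0 v x)
        + (pd 0 v x)*(β*(gradNorm v x ^ (β-1))*(((pd2 0 0 v x)*(pd 0 v x)+(pd2 0 1 v x)*(pd 1 v x))/(gradNorm v x))) := by
    show fderiv ℝ (fun y => gradNorm v y ^ β * pd 0 v y) x (ee 0) = _
    rw [hG0.fderiv]
    simp only [ContinuousLinearMap.add_apply, ContinuousLinearMap.coe_smul',
      Pi.smul_apply, hip, smul_eq_mul, hsq']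
    rw [hqb]
    field_simp
    ring
  have e10 : pd 1 (fun y => gradNorm v y ^ β * pd 0 v y) x
      = (gradNorm v x ^ (β-1))*(gradNorm v x)*(pd2 1 0 v x)
        + (pd 0 v x)*(β*(gradNorm v x ^ (β-1))*(((pd2 1 0 v x)*(pd 0 v x)+(pd2 1 1 v x)*(pd 1 v x))/(gradNorm v x))) := by
    show fderiv ℝ (fun y => gradNorm v y ^ β * pd 0 v y) x (ee 1) = _
    rw [hG0.fderiv]
    simp only [ContinuousLinearMap.add_apply, ContinuousLinearMap.coe_smul',
      Pi.smul_apply, hip, smul_eq_mul, hsq']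
    rw [hqb]
    field_simp
    ring
  have e01 : pd 0 (fun y => gradNorm v y ^ β * pd 1 v y) x
      = (gradNorm v x ^ (β-1))*(gradNorm v x)*(pd2 0 1 v x)
        + (pd 1 v x)*(β*(gradNorm v x ^ (β-1))*(((pd2 0 0 v x)*(pd 0 v x)+(pd2 0 1 v x)*(pd 1 v x))/(gradNorm v x))) := by
    show fderiv ℝ (fun y => gradNorm v y ^ β * pd 1 v y) x (ee 0) = _
    rw [hG1.fderiv]
    simp only [ContinuousLinearMap.add_apply, ContinuousLinearMap.coe_smul',
      Pi.smul_apply, hip, smul_eq_mul, hsq']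
    rw [hqb]
    field_simp
    ring
  have e11 : pd 1 (fun y => gradNorm v y ^ β * pd 1 v y) x
      = (gradNorm v x ^ (β-1))*(gradNorm v x)*(pd2 1 1 v x)
        + (pd 1 v x)*(β*(gradNorm v x ^ (β-1))*(((pd2 1 0 v x)*(pd 0 v x)+(pd2 1 1 v x)*(pd 1 v x))/(gradNorm v x))) := by
    show fderiv ℝ (fun y => gradNorm v y ^ β * pd 1 v y) x (ee 1) = _
    rw [hG1.fderiv]
    simp only [ContinuousLinearMap.add_apply, ContinuousLinearMap.coe_smul',
      Pi.smul_apply, hip, smul_eq_mul, hsq']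
    rw [hqb]
    field_simp
    ring
  have eR0 : pd 0 (fun y => gradNorm v y ^ (β+1)) x
      = (β+1)*((gradNorm v x ^ (β-1))*(gradNorm v x))*(((pd2 0 0 v x)*(pd 0 v x)+(pd2 0 1 v x)*(pd 1 v x))/(gradNorm v x)) := by
    show fderiv ℝ (fun y => gradNorm v y ^ (β+1)) x (ee 0) = _
    rw [hrp1.fderiv]
    simp only [ContinuousLinearMap.add_apply, ContinuousLinearMap.coe_smul',
      Pi.smul_apply, hip, smul_eq_mul, hsq', add_sub_cancel_right]
    rw [hqb]
    field_simp
    ring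
  have eR1 : pd 1 (fun y => gradNorm v y ^ (β+1)) x
      = (β+1)*((gradNorm v x ^ (β-1))*(gradNorm v x))*(((pd2 1 0 v x)*(pd 0 v x)+(pd2 1 1 v x)*(pd 1 v x))/(gradNorm v x)) := by
    show fderiv ℝ (fun y => gradNorm v y ^ (β+1)) x (ee 1) = _
    rw [hrp1.fderiv]
    simp only [ContinuousLinearMap.add_apply, ContinuousLinearMap.coe_smul',
      Pi.smul_apply, hip, smul_eq_mul, hsq', add_sub_cancel_right]
    rw [hqb]
    field_simp
    ring
  have hb1 : β + 1 ≠ 0 := by linarith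
  have hq2 : gradNorm v x ^ 2 = pd 0 v x ^ 2 + pd 1 v x ^ 2 := Real.sq_sqrt hTnn
  have hT' : pd 0 v x ^ 2 + pd 1 v x ^ 2 ≠ 0 := hgrad
  simp only [jdet, infLap, gradSq, lap] at hpl ⊢
  rw [e00, e10, e01, e11, eR0, eR1, h2b]
  rw [← hsymm] at hpl ⊢
  linear_combination alg_main (pd 0 v x) (pd 1 v x) (pd2 0 0 v x) (pd2 0 1 v x)
    (pd2 1 1 v x) p β (gradNorm v x) (gradNorm v x ^ (β-1)) hq0 hb1 hT' hq2
    (by linarith [hpl])
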